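/- (Gevrey dyadic partition of unity, equations (2.21) and (A.2.7)) Let s > 1 and n ≥ 1. Then there exist C > 0 and smooth compactly supported functions χ₀ : ℝ^n → ℝ and χ : ℝ^n → ℝ, with supp χ contained in a compact annulus {r₁ ≤ |ξ| ≤ r₂} with 0 < r₁ < r₂ (in particular 0 ∉ supp χ), such that both χ₀ and χ are Gevrey of order s with constant C (|∂^α χ₀|, |∂^α χ| ≤ C^{1+|α|}(α!)^s for all α), and χ₀(ξ) + Σ_{ν=1}^∞ χ(2^{−ν} ξ) = 1 for every ξ ∈ ℝ^n, the sum being locally finite. -/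

import Mathlib

open scoped BigOperators Real
open MeasureTheory

noncomputable section

variable {n m : ℕ} {E : Type*} [NormedAddCommGroup E] [NormedSpace ℝ E]

/-- Partial derivative in the `i`-th coordinate of the first factor. -/
def pdx (i : Fin n) (f : (Fin n → ℝ) × (Fin m → ℝ) → E) :
    (Fin n → ℝ) × (Fin m → ℝ) → E :=
  fun p => fderiv ℝ f p (Pi.single i 1, 0)

/-- Partial derivative in the `j`-th coordinate of the second factor. -/
def pdy (j : Fin m) (f : (Fin n → ℝ) × (Fin m → ℝ) → E) :
    (Fin n → ℝ) × (Fin m → ℝ) → E :=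
  fun p => fderiv ℝ f p (0, Pi.single j 1)

/-- Iterated partial derivative ∂_x^α in the first factor. -/
def mdx (α : Fin n → ℕ) (f : (Fin n → ℝ) × (Fin m → ℝ) → E) :
    (Fin n → ℝ) × (Fin m → ℝ) → E :=
  (List.finRange n).foldr (fun i g => (pdx i)^[α i] g) f

/-- Iterated partial derivative ∂_y^β in the second factor. -/
def mdy (β : Fin m → ℕ) (f : (Fin n → ℝ) × (Fin m → ℝ) → E) :
    (Fin n → ℝ) × (Fin m → ℝ) → E :=
  (List.finRange m).foldr (fun j g => (pdy j)^[β j] g) f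

/-- Partial derivative on a single Euclidean factor. -/
def pd {d : ℕ} (i : Fin d) (f : (Fin d → ℝ) → E) : (Fin d → ℝ) → E :=
  fun x => fderiv ℝ f x (Pi.single i 1)

/-- Iterated partial derivative ∂^α on a single Euclidean factor. -/
def md {d : ℕ} (α : Fin d → ℕ) (f : (Fin d → ℝ) → E) : (Fin d → ℝ) → E :=
  (List.finRange d).foldr (fun i g => (pd i)^[α i] g) f

/-- Multi-index factorial `α!`. -/
def mfact {d : ℕ} (α : Fin d → ℕ) : ℕ := ∏ i, (α i).factorial

/-- Multi-index length `|α|`. -/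
def msize {d : ℕ} (α : Fin d → ℕ) : ℕ := ∑ i, α i


namespace GevreyAux

/-- Averaging operator. -/
def Aop (l : ℝ) (f : ℝ → ℝ) : ℝ → ℝ := fun x => (2 * l)⁻¹ * ∫ t in (x - l)..(x + l), f t

/-- Symmetric difference quotient. -/
def Dop (l : ℝ) (f : ℝ → ℝ) : ℝ → ℝ := fun x => (2 * l)⁻¹ * (f (x + l) - f (x - l))

variable {l : ℝ} {f f' : ℝ → ℝ}

theorem continuous_Dop (hf : Continuous f) : Continuous (Dop l f) := by
  unfold Dop
  fun_prop

theorem hasDerivAt_Aop (hf : Continuous f) (x : ℝ) :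
    HasDerivAt (Aop l f) (Dop l f x) x := by
  have key : ∀ y : ℝ, ∫ t in (y - l)..(y + l), f t =
      (∫ t in (0:ℝ)..(y + l), f t) - ∫ t in (0:ℝ)..(y - l), f t := by
    intro y
    rw [intervalIntegral.integral_interval_sub_left (hf.intervalIntegrable _ _)
      (hf.intervalIntegrable _ _)]
  have hA : Aop l f = fun y => (2 * l)⁻¹ *
      ((∫ t in (0:ℝ)..(y + l), f t) - ∫ t in (0:ℝ)..(y - l), f t) := by
    funext y; rw [Aop, key]
  rw [hA]
  have h1 : HasDerivAt (fun y : ℝ => ∫ t in (0:ℝ)..(y + l), f t) (f (x + l)) x := by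
    have := (hf.integral_hasStrictDerivAt 0 (x + l)).hasDerivAt
    have h2 : HasDerivAt (fun y : ℝ => y + l) 1 x := (hasDerivAt_id x).add_const l
    simpa [Function.comp_def] using this.comp x h2
  have h2 : HasDerivAt (fun y : ℝ => ∫ t in (0:ℝ)..(y - l), f t) (f (x - l)) x := by
    have := (hf.integral_hasStrictDerivAt 0 (x - l)).hasDerivAt
    have h2 : HasDerivAt (fun y : ℝ => y - l) 1 x := (hasDerivAt_id x).sub_const l
    simpa [Function.comp_def] using this.comp x h2
  simpa [Dop] using (h1.sub h2).const_mul ((2 * l)⁻¹)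

theorem continuous_Aop (hf : Continuous f) : Continuous (Aop l f) := by
  have h : Differentiable ℝ (Aop l f) := fun x => (hasDerivAt_Aop (l := l) hf x).differentiableAt
  exact h.continuous

theorem hasDerivAt_Aop' (hl : 0 < l) (hf : ∀ x, HasDerivAt f (f' x) x) (hf' : Continuous f')
    (x : ℝ) : HasDerivAt (Aop l f) (Aop l f' x) x := by
  have hf_cont : Continuous f := by
    have h : Differentiable ℝ f := fun x => (hf x).differentiableAt
    exact h.continuous
  have := hasDerivAt_Aop (l := l) hf_cont x
  have heq : Dop l f x = Aop l f' x := by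
    rw [Dop, Aop]
    congr 1
    rw [intervalIntegral.integral_eq_sub_of_hasDerivAt (fun t _ => hf t)
      (hf'.intervalIntegrable _ _)]
  rwa [heq] at this

theorem abs_Aop_le (hl : 0 < l) {M : ℝ} (hf : ∀ x, |f x| ≤ M) (x : ℝ) : |Aop l f x| ≤ M := by
  have hM : 0 ≤ M := le_trans (abs_nonneg _) (hf 0)
  have hb : ‖∫ t in (x - l)..(x + l), f t‖ ≤ M * |(x + l) - (x - l)| :=
    intervalIntegral.norm_integral_le_of_norm_le_const
      (fun t _ => by simpa [Real.norm_eq_abs] using hf t)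
  have h2 : |(x + l) - (x - l)| = 2 * l := by
    rw [show (x + l) - (x - l) = 2 * l by ring, abs_of_pos (by linarith)]
  rw [Aop, abs_mul, abs_inv, abs_of_pos (by linarith : (0:ℝ) < 2 * l), ← Real.norm_eq_abs]
  rw [h2] at hb
  calc (2 * l)⁻¹ * ‖∫ t in (x - l)..(x + l), f t‖ ≤ (2 * l)⁻¹ * (M * (2 * l)) := by
        apply mul_le_mul_of_nonneg_left hb (by positivity)
    _ = M := by field_simp

theorem abs_Dop_le (hl : 0 < l) {M : ℝ} (hf : ∀ x, |f x| ≤ M) (x : ℝ) :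
    |Dop l f x| ≤ M / l := by
  rw [Dop, abs_mul, abs_inv, abs_of_pos (by linarith : (0:ℝ) < 2 * l)]
  have : |f (x + l) - f (x - l)| ≤ 2 * M := by
    calc |f (x + l) - f (x - l)| ≤ |f (x + l)| + |f (x - l)| := abs_sub _ _
      _ ≤ M + M := add_le_add (hf _) (hf _)
      _ = 2 * M := by ring
  calc (2 * l)⁻¹ * |f (x + l) - f (x - l)| ≤ (2 * l)⁻¹ * (2 * M) := by
        apply mul_le_mul_of_nonneg_left this (by positivity)
    _ = M / l := by field_simp

theorem Aop_eq_one (hl : 0 < l) {a b : ℝ} (hf : ∀ x, a ≤ x → x ≤ b → f x = 1)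
    {x : ℝ} (hx1 : a + l ≤ x) (hx2 : x ≤ b - l) : Aop l f x = 1 := by
  rw [Aop]
  have : ∫ t in (x - l)..(x + l), f t = ∫ t in (x - l)..(x + l), (1:ℝ) := by
    apply intervalIntegral.integral_congr
    intro t ht
    rw [Set.uIcc_of_le (by linarith)] at ht
    exact hf t (by linarith [ht.1]) (by linarith [ht.2])
  rw [this]
  simp only [intervalIntegral.integral_const, smul_eq_mul, mul_one]
  rw [show x + l - (x - l) = 2 * l by ring]
  field_simp

theorem Aop_eq_zero (hl : 0 < l) {a b : ℝ} (hf : ∀ x, x < a ∨ b < x → f x = 0)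
    {x : ℝ} (hx : x < a - l ∨ b + l < x) : Aop l f x = 0 := by
  rw [Aop]
  have : ∫ t in (x - l)..(x + l), f t = ∫ t in (x - l)..(x + l), (0:ℝ) := by
    apply intervalIntegral.integral_congr
    intro t ht
    rw [Set.uIcc_of_le (by linarith)] at ht
    rcases hx with h | h
    · exact hf t (Or.inl (by linarith [ht.2]))
    · exact hf t (Or.inr (by linarith [ht.1]))
  rw [this]
  simp

theorem abs_Aop_sub_le (hl : 0 < l) {M : ℝ} (hM : 0 ≤ M)
    (hf : ∀ x, HasDerivAt f (f' x) x) (hf' : ∀ x, |f' x| ≤ M) (x : ℝ) :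
    |Aop l f x - f x| ≤ l * M := by
  have hf_cont : Continuous f := by
    have h : Differentiable ℝ f := fun x => (hf x).differentiableAt
    exact h.continuous
  have hint : ∫ t in (x - l)..(x + l), f x = (2 * l) * f x := by
    simp only [intervalIntegral.integral_const]
    rw [smul_eq_mul]; ring_nf
  have hsub : Aop l f x - f x = (2 * l)⁻¹ * ∫ t in (x - l)..(x + l), (f t - f x) := by
    rw [Aop, intervalIntegral.integral_sub (hf_cont.intervalIntegrable _ _)
      (intervalIntegrable_const), hint]
    field_simp
  rw [hsub]
  have hb : ‖∫ t in (x - l)..(x + l), (f t - f x)‖ ≤ (l * M) * |(x + l) - (x - l)| := by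
    apply intervalIntegral.norm_integral_le_of_norm_le_const
    intro t ht
    rw [Set.uIoc_of_le (by linarith)] at ht
    rw [Real.norm_eq_abs]
    have := Convex.norm_image_sub_le_of_norm_hasDerivWithin_le
      (fun y _ => (hf y).hasDerivWithinAt) (fun y _ => hf' y) (convex_univ)
      (Set.mem_univ x) (Set.mem_univ t)
    calc |f t - f x| ≤ M * |t - x| := by simpa [Real.norm_eq_abs] using this
      _ ≤ M * l := by
          apply mul_le_mul_of_nonneg_left _ hM
          rw [abs_le]; constructor <;> [linarith [ht.1]; linarith [ht.2]]
      _ = l * M := by ring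
  have h2 : |(x + l) - (x - l)| = 2 * l := by
    rw [show (x + l) - (x - l) = 2 * l by ring, abs_of_pos (by linarith)]
  rw [h2] at hb
  rw [abs_mul, abs_inv, abs_of_pos (by linarith : (0:ℝ) < 2 * l), ← Real.norm_eq_abs]
  calc (2 * l)⁻¹ * ‖∫ t in (x - l)..(x + l), (f t - f x)‖ ≤ (2 * l)⁻¹ * ((l * M) * (2 * l)) := by
        apply mul_le_mul_of_nonneg_left hb (by positivity)
    _ = l * M := by field_simp
section Part2
variable {s : ℝ}

/-- sum of the series of lengths -/
def Ssum (s : ℝ) : ℝ := ∑' m : ℕ, ((m : ℝ) + 1) ^ (-s)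

def eps (s : ℝ) : ℝ := (4 * max 1 (Ssum s))⁻¹

def ell (s : ℝ) (j : ℕ) : ℝ := eps s * ((j : ℝ) + 1) ^ (-s)

theorem eps_pos : 0 < eps s := by
  rw [eps]
  have : (0:ℝ) < max 1 (Ssum s) := lt_of_lt_of_le one_pos (le_max_left _ _)
  positivity

theorem ell_pos (j : ℕ) : 0 < ell s j := by
  rw [ell]
  have h1 : (0:ℝ) < (j : ℝ) + 1 := by positivity
  have := Real.rpow_pos_of_pos h1 (-s)
  exact mul_pos eps_pos this

theorem summable_base (hs : 1 < s) : Summable (fun m : ℕ => ((m : ℝ) + 1) ^ (-s)) := by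
  have h := (Real.summable_one_div_nat_rpow (p := s)).2 hs
  have h2 := (summable_nat_add_iff (f := fun n : ℕ => 1 / (n : ℝ) ^ s) 1).2 h
  apply h2.congr
  intro m
  have hm : (0:ℝ) < (m : ℝ) + 1 := by positivity
  rw [Real.rpow_neg hm.le]
  push_cast
  rw [one_div]

theorem summable_ell (hs : 1 < s) : Summable (ell s) := (summable_base hs).mul_left _

theorem sum_ell_le (hs : 1 < s) (t : Finset ℕ) : ∑ j ∈ t, ell s j ≤ 1 / 4 := by
  have h1 : ∑ j ∈ t, ell s j ≤ eps s * Ssum s := by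
    have : ∑ j ∈ t, ell s j = eps s * ∑ j ∈ t, ((j : ℝ) + 1) ^ (-s) := by
      rw [Finset.mul_sum]; rfl
    rw [this]
    apply mul_le_mul_of_nonneg_left _ eps_pos.le
    exact (summable_base hs).sum_le_tsum t (fun j _ => (Real.rpow_pos_of_pos (by positivity) _).le)
  have h2 : eps s * Ssum s ≤ 1 / 4 := by
    rw [eps]
    have hm : (0:ℝ) < max 1 (Ssum s) := lt_of_lt_of_le one_pos (le_max_left _ _)
    have h3 : Ssum s ≤ max 1 (Ssum s) := le_max_right _ _
    calc (4 * max 1 (Ssum s))⁻¹ * Ssum s ≤ (4 * max 1 (Ssum s))⁻¹ * max 1 (Ssum s) := by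
          apply mul_le_mul_of_nonneg_left h3 (by positivity)
      _ = 1 / 4 := by field_simp
  linarith

theorem eps_le (hs : 1 < s) : eps s ≤ 1 / 4 := by
  have := sum_ell_le hs {0}
  simpa [ell] using this

/-- the starting trapezoid -/
def f0 : ℝ → ℝ := fun x => max 0 (min 1 (7 - 4 * |x|))

theorem continuous_f0 : Continuous f0 := by unfold f0; fun_prop

theorem abs_f0_le (x : ℝ) : |f0 x| ≤ 1 := by
  rw [f0, abs_le]
  constructor
  · simp only [le_max_iff]; left; norm_num
  · apply max_le (by norm_num)
    exact le_trans (min_le_left _ _) (le_refl 1)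

theorem f0_eq_one {x : ℝ} (hx : |x| ≤ 3 / 2) : f0 x = 1 := by
  rw [f0]
  have : (1:ℝ) ≤ 7 - 4 * |x| := by linarith
  rw [min_eq_left this, max_eq_right (by norm_num)]

theorem f0_eq_zero {x : ℝ} (hx : 7 / 4 ≤ |x|) : f0 x = 0 := by
  rw [f0]
  have : 7 - 4 * |x| ≤ 0 := by linarith
  rw [max_eq_left]
  exact le_trans (min_le_right _ _) this

/-- iterated difference quotients of f0 -/
def gseq (s : ℝ) : ℕ → ℝ → ℝ
  | 0 => f0
  | k + 1 => GevreyAux.Dop (ell s k) (gseq s k)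

/-- bound -/
def Bnd (s : ℝ) (k : ℕ) : ℝ := ∏ j ∈ Finset.range k, (ell s j)⁻¹

theorem Bnd_pos (k : ℕ) : 0 < Bnd s k :=
  Finset.prod_pos (fun j _ => inv_pos.2 (ell_pos j))

theorem Bnd_succ (k : ℕ) : Bnd s (k + 1) = Bnd s k * (ell s k)⁻¹ := Finset.prod_range_succ _ _

theorem continuous_gseq (k : ℕ) : Continuous (gseq s k) := by
  induction k with
  | zero => exact continuous_f0
  | succ k ih => exact GevreyAux.continuous_Dop ih

theorem abs_gseq_le (k : ℕ) (x : ℝ) : |gseq s k x| ≤ Bnd s k := by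
  induction k generalizing x with
  | zero => simpa [Bnd, gseq] using abs_f0_le x
  | succ k ih =>
    have := GevreyAux.abs_Dop_le (l := ell s k) (ell_pos (s := s) k) (fun y => ih y) x
    rw [Bnd_succ, div_eq_mul_inv] at *
    exact this

/-- `FF s k j` represents the `k`-th derivative of the `(k+j)`-th stage. -/
def FF (s : ℝ) (k : ℕ) : ℕ → ℝ → ℝ
  | 0 => gseq s k
  | j + 1 => GevreyAux.Aop (ell s (k + j)) (FF s k j)

theorem continuous_FF (k j : ℕ) : Continuous (FF s k j) := by
  induction j with
  | zero => exact continuous_gseq k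
  | succ j ih => exact GevreyAux.continuous_Aop ih

theorem abs_FF_le (k j : ℕ) (x : ℝ) : |FF s k j x| ≤ Bnd s k := by
  induction j generalizing x with
  | zero => exact abs_gseq_le k x
  | succ j ih => exact GevreyAux.abs_Aop_le (ell_pos (k + j)) (fun y => ih y) x

theorem hasDerivAt_FF (k j : ℕ) (x : ℝ) :
    HasDerivAt (FF s k (j + 1)) (FF s (k + 1) j x) x := by
  induction j generalizing x with
  | zero =>
    exact GevreyAux.hasDerivAt_Aop (continuous_gseq k) x
  | succ j ih =>
    have h := GevreyAux.hasDerivAt_Aop' (l := ell s (k + (j + 1))) (ell_pos (s := s) (k + (j + 1)))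
      (f' := FF s (k + 1) j) (fun y => ih y) (continuous_FF (k + 1) j) x
    have e : k + (j + 1) = (k + 1) + j := by omega
    rw [show FF s k (j + 1 + 1) = GevreyAux.Aop (ell s (k + (j + 1))) (FF s k (j + 1)) from rfl,
      show FF s (k + 1) (j + 1) = GevreyAux.Aop (ell s ((k + 1) + j)) (FF s (k + 1) j) from rfl,
      ← e]
    exact h

theorem abs_FF_succ_sub (k j : ℕ) (x : ℝ) :
    |FF s k (j + 2) x - FF s k (j + 1) x| ≤ ell s (k + (j + 1)) * Bnd s (k + 1) := by
  exact GevreyAux.abs_Aop_sub_le (ell_pos (k + (j + 1))) (Bnd_pos (k + 1)).le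
    (fun y => hasDerivAt_FF k j y) (fun y => abs_FF_le (k + 1) j y) x

/-- the limit functions: `phi s k` is the `k`-th derivative of the Gevrey plateau. -/
def phi (s : ℝ) (k : ℕ) : ℝ → ℝ :=
  fun x => FF s k 1 x + ∑' j : ℕ, (FF s k (j + 2) x - FF s k (j + 1) x)

theorem tendstoUniformly_FF (hs : 1 < s) (k : ℕ) :
    TendstoUniformly (fun J : ℕ => FF s k (J + 1)) (phi s k) Filter.atTop := by
  have hsum : Summable (fun j : ℕ => ell s (k + (j + 1)) * Bnd s (k + 1)) := by
    apply Summable.mul_right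
    have h2 := (summable_nat_add_iff (f := ell s) (k + 1)).2 (summable_ell hs)
    apply h2.congr
    intro j
    congr 1
    omega
  have hle : ∀ (j : ℕ) (x : ℝ), ‖FF s k (j + 2) x - FF s k (j + 1) x‖ ≤
      ell s (k + (j + 1)) * Bnd s (k + 1) := by
    intro j x
    simpa [Real.norm_eq_abs] using abs_FF_succ_sub k j x
  have h1 := tendstoUniformly_tsum_nat hsum hle
  rw [Metric.tendstoUniformly_iff] at h1 ⊢
  intro δ hδ
  filter_upwards [h1 δ hδ] with J hJ x
  have hJ' := hJ x
  have key : FF s k (J + 1) x = FF s k 1 x + ∑ j ∈ Finset.range J, (FF s k (j + 2) x - FF s k (j + 1) x) := by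
    have := Finset.sum_range_sub (f := fun j => FF s k (j + 1) x) J
    rw [this]
    ring
  rw [phi, key]
  rw [Real.dist_eq] at hJ' ⊢
  have : FF s k 1 x + (∑' j : ℕ, (FF s k (j + 2) x - FF s k (j + 1) x)) -
      (FF s k 1 x + ∑ j ∈ Finset.range J, (FF s k (j + 2) x - FF s k (j + 1) x)) =
      (∑' j : ℕ, (FF s k (j + 2) x - FF s k (j + 1) x)) -
      ∑ j ∈ Finset.range J, (FF s k (j + 2) x - FF s k (j + 1) x) := by ring
  rw [this]
  exact hJ'

theorem tendsto_FF (hs : 1 < s) (k : ℕ) (x : ℝ) :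
    Filter.Tendsto (fun J : ℕ => FF s k (J + 1) x) Filter.atTop (nhds (phi s k x)) :=
  (tendstoUniformly_FF hs k).tendsto_at x

theorem hasDerivAt_phi (hs : 1 < s) (k : ℕ) (x : ℝ) :
    HasDerivAt (phi s k) (phi s (k + 1) x) x := by
  apply hasDerivAt_of_tendstoUniformly (l := (Filter.atTop : Filter ℕ))
    (f := fun J : ℕ => FF s k (J + 2)) (f' := fun J x => FF s (k + 1) (J + 1) x)
  · exact tendstoUniformly_FF hs (k + 1)
  · exact Filter.Eventually.of_forall (fun J y => hasDerivAt_FF k (J + 1) y)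
  · intro y
    have := tendsto_FF hs k y
    exact this.comp (Filter.tendsto_add_atTop_nat 1)

theorem abs_phi_le (hs : 1 < s) (k : ℕ) (x : ℝ) : |phi s k x| ≤ Bnd s k := by
  have h1 : Filter.Tendsto (fun J : ℕ => |FF s k (J + 1) x|) Filter.atTop
      (nhds |phi s k x|) := (tendsto_FF hs k x).abs
  exact le_of_tendsto h1 (Filter.Eventually.of_forall (fun J => abs_FF_le k (J + 1) x))

theorem FF0_eq_one (hs : 1 < s) (m : ℕ) {x : ℝ}
    (hx : |x| ≤ 3 / 2 - ∑ i ∈ Finset.range m, ell s i) : FF s 0 m x = 1 := by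
  induction m generalizing x with
  | zero => exact f0_eq_one (by simpa using hx)
  | succ m ih =>
    have hc : ∑ i ∈ Finset.range (m + 1), ell s i
        = (∑ i ∈ Finset.range m, ell s i) + ell s m := Finset.sum_range_succ _ _
    have h0m : (0 : ℕ) + m = m := by omega
    show GevreyAux.Aop (ell s (0 + m)) (FF s 0 m) x = 1
    rw [h0m]
    apply GevreyAux.Aop_eq_one (ell_pos m)
      (a := -(3 / 2 - ∑ i ∈ Finset.range m, ell s i))
      (b := 3 / 2 - ∑ i ∈ Finset.range m, ell s i)
    · intro y h1 h2
      exact ih (abs_le.2 ⟨by linarith, by linarith⟩)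
    · rw [hc] at hx
      have := (abs_le.1 hx).1
      linarith
    · rw [hc] at hx
      have := (abs_le.1 hx).2
      linarith

theorem FF0_eq_zero (hs : 1 < s) (m : ℕ) {x : ℝ}
    (hx : 7 / 4 + ∑ i ∈ Finset.range m, ell s i < |x|) : FF s 0 m x = 0 := by
  induction m generalizing x with
  | zero => exact f0_eq_zero (by simp at hx; linarith)
  | succ m ih =>
    have hc : ∑ i ∈ Finset.range (m + 1), ell s i
        = (∑ i ∈ Finset.range m, ell s i) + ell s m := Finset.sum_range_succ _ _
    have h0m : (0 : ℕ) + m = m := by omega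
    show GevreyAux.Aop (ell s (0 + m)) (FF s 0 m) x = 0
    rw [h0m]
    apply GevreyAux.Aop_eq_zero (ell_pos m)
      (a := -(7 / 4 + ∑ i ∈ Finset.range m, ell s i))
      (b := 7 / 4 + ∑ i ∈ Finset.range m, ell s i)
    · have hnn : 0 ≤ ∑ i ∈ Finset.range m, ell s i :=
        Finset.sum_nonneg fun i _ => (ell_pos i).le
      intro y hy
      apply ih
      rcases hy with h | h
      · rw [abs_of_neg (by linarith)]; linarith
      · rw [abs_of_pos (by linarith)]; linarith
    · rw [hc] at hx
      rcases abs_cases x with ⟨he, _⟩ | ⟨he, _⟩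
      · right; linarith
      · left; linarith

theorem phi0_eq_one (hs : 1 < s) {x : ℝ} (hx : |x| ≤ 5 / 4) : phi s 0 x = 1 := by
  have h : ∀ J : ℕ, FF s 0 (J + 1) x = 1 := by
    intro J
    apply FF0_eq_one hs
    have := sum_ell_le hs (Finset.range (J + 1))
    linarith
  have := tendsto_FF hs 0 x
  rw [show (fun J : ℕ => FF s 0 (J + 1) x) = fun _ => (1:ℝ) from funext h] at this
  exact (tendsto_nhds_unique this tendsto_const_nhds).symm ▸ rfl

theorem phi0_eq_zero (hs : 1 < s) {x : ℝ} (hx : 2 < |x|) : phi s 0 x = 0 := by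
  have h : ∀ J : ℕ, FF s 0 (J + 1) x = 0 := by
    intro J
    apply FF0_eq_zero hs
    have := sum_ell_le hs (Finset.range (J + 1))
    linarith
  have := tendsto_FF hs 0 x
  rw [show (fun J : ℕ => FF s 0 (J + 1) x) = fun _ => (0:ℝ) from funext h] at this
  exact (tendsto_nhds_unique this tendsto_const_nhds).symm ▸ rfl

theorem deriv_phi (hs : 1 < s) (k : ℕ) : deriv (phi s k) = phi s (k + 1) :=
  funext fun x => (hasDerivAt_phi hs k x).deriv

open scoped ContDiff in
theorem contDiff_phi (hs : 1 < s) (k : ℕ) : ContDiff ℝ (⊤ : ℕ∞) (phi s k) := by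
  show ContDiff ℝ ∞ (phi s k)
  rw [contDiff_infty]
  intro N
  induction N generalizing k with
  | zero =>
    have hdiff : Differentiable ℝ (phi s k) := fun x => (hasDerivAt_phi hs k x).differentiableAt
    exact contDiff_zero.2 hdiff.continuous
  | succ N ih =>
    have hcast : ((N + 1 : ℕ) : WithTop ℕ∞) = (N : WithTop ℕ∞) + 1 := by push_cast; rfl
    rw [hcast, contDiff_succ_iff_deriv]
    refine ⟨fun x => (hasDerivAt_phi hs k x).differentiableAt, by simp, ?_⟩
    rw [deriv_phi hs k]
    exact ih (k + 1)

theorem Bnd_eq (k : ℕ) : Bnd s k = ((eps s)⁻¹) ^ k * ((k.factorial : ℝ)) ^ s := by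
  have h1 : ∀ j : ℕ, (ell s j)⁻¹ = (eps s)⁻¹ * ((j : ℝ) + 1) ^ s := by
    intro j
    rw [ell, mul_inv, Real.rpow_neg (by positivity), inv_inv]
  rw [Bnd]
  calc ∏ j ∈ Finset.range k, (ell s j)⁻¹
      = ∏ j ∈ Finset.range k, ((eps s)⁻¹ * ((j : ℝ) + 1) ^ s) := by
        exact Finset.prod_congr rfl (fun j _ => h1 j)
    _ = ((eps s)⁻¹) ^ k * ∏ j ∈ Finset.range k, ((j : ℝ) + 1) ^ s := by
        rw [Finset.prod_mul_distrib, Finset.prod_const, Finset.card_range]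
    _ = ((eps s)⁻¹) ^ k * ((k.factorial : ℝ)) ^ s := by
        rw [Real.finset_prod_rpow _ _ (fun j _ => by positivity)]
        congr 2
        push_cast [← Finset.prod_range_add_one_eq_factorial]
        rfl

section Multi

variable {d : ℕ}

/-- Product of one–variable functions, with family index. -/
def Qp (ψ : ℕ → ℝ → ℝ) (β : Fin d → ℕ) : (Fin d → ℝ) → ℝ := fun ξ => ∏ i, ψ (β i) (ξ i)

variable {ψ ψ' : ℕ → ℝ → ℝ}

theorem hasFDerivAt_Qp (hψ : ∀ k x, HasDerivAt (ψ k) (ψ (k + 1) x) x) (β : Fin d → ℕ)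
    (ξ : Fin d → ℝ) :
    HasFDerivAt (Qp ψ β)
      (∑ i, (∏ j ∈ Finset.univ.erase i, ψ (β j) (ξ j)) •
        (ψ (β i + 1) (ξ i) •
          (ContinuousLinearMap.proj (R := ℝ) (φ := fun _ : Fin d => ℝ) i))) ξ := by
  apply HasFDerivAt.finset_prod
  intro i _
  exact (hψ (β i) (ξ i)).comp_hasFDerivAt ξ
    (ContinuousLinearMap.proj (R := ℝ) (φ := fun _ : Fin d => ℝ) i).hasFDerivAt

theorem differentiableAt_Qp (hψ : ∀ k x, HasDerivAt (ψ k) (ψ (k + 1) x) x) (β : Fin d → ℕ)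
    (ξ : Fin d → ℝ) : DifferentiableAt ℝ (Qp ψ β) ξ :=
  (hasFDerivAt_Qp hψ β ξ).differentiableAt

theorem pd_Qp (hψ : ∀ k x, HasDerivAt (ψ k) (ψ (k + 1) x) x) (β : Fin d → ℕ) (i : Fin d) :
    pd i (Qp ψ β) = Qp ψ (Function.update β i (β i + 1)) := by
  funext ξ
  show fderiv ℝ (Qp ψ β) ξ (Pi.single i 1) = _
  rw [(hasFDerivAt_Qp hψ β ξ).fderiv]
  rw [ContinuousLinearMap.sum_apply]
  have hterm : ∀ j : Fin d,
      ((∏ k ∈ Finset.univ.erase j, ψ (β k) (ξ k)) •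
        (ψ (β j + 1) (ξ j) •
          (ContinuousLinearMap.proj (R := ℝ) (φ := fun _ : Fin d => ℝ) j))) (Pi.single (M := fun _ : Fin d => ℝ) i 1)
      = (∏ k ∈ Finset.univ.erase j, ψ (β k) (ξ k)) * (ψ (β j + 1) (ξ j) * (Pi.single (M := fun _ : Fin d => ℝ) i 1 j)) := by
    intro j
    simp [smul_eq_mul, mul_assoc]
  rw [Finset.sum_congr rfl (fun j _ => hterm j)]
  rw [Finset.sum_eq_single_of_mem i (Finset.mem_univ i)]
  · rw [Pi.single_eq_same, mul_one, mul_comm]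
    rw [Qp]
    rw [← Finset.mul_prod_erase Finset.univ _ (Finset.mem_univ i)]
    rw [Function.update_self]
    congr 1
    apply Finset.prod_congr rfl
    intro j hj
    rw [Function.update_of_ne (Finset.ne_of_mem_erase hj)]
  · intro j _ hj
    rw [Pi.single_eq_of_ne hj, mul_zero, mul_zero]

theorem pd_sub {f g : (Fin d → ℝ) → ℝ} (hf : ∀ ξ, DifferentiableAt ℝ f ξ)
    (hg : ∀ ξ, DifferentiableAt ℝ g ξ) (i : Fin d) :
    pd i (fun ξ => f ξ - g ξ) = fun ξ => pd i f ξ - pd i g ξ := by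
  funext ξ
  show fderiv ℝ (fun ξ => f ξ - g ξ) ξ (Pi.single i 1) = _
  rw [fderiv_fun_sub (hf ξ) (hg ξ)]
  rfl

theorem pd_iter_Qp_sub (hψ : ∀ k x, HasDerivAt (ψ k) (ψ (k + 1) x) x)
    (hψ' : ∀ k x, HasDerivAt (ψ' k) (ψ' (k + 1) x) x) (i : Fin d) (k : ℕ) (β β' : Fin d → ℕ) :
    (pd i)^[k] (fun ξ => Qp ψ β ξ - Qp ψ' β' ξ)
      = fun ξ => Qp ψ (Function.update β i (β i + k)) ξ
          - Qp ψ' (Function.update β' i (β' i + k)) ξ := by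
  induction k with
  | zero =>
    simp only [Function.iterate_zero, id_eq, Nat.add_zero, Function.update_eq_self]
  | succ k ih =>
    rw [Function.iterate_succ_apply', ih]
    rw [pd_sub (fun ξ => differentiableAt_Qp hψ _ ξ) (fun ξ => differentiableAt_Qp hψ' _ ξ)]
    rw [pd_Qp hψ, pd_Qp hψ']
    rw [Function.update_idem, Function.update_idem, Function.update_self,
      Function.update_self]
    rfl

theorem md_Qp_sub (hψ : ∀ k x, HasDerivAt (ψ k) (ψ (k + 1) x) x)
    (hψ' : ∀ k x, HasDerivAt (ψ' k) (ψ' (k + 1) x) x) (α β β' : Fin d → ℕ) :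
    md α (fun ξ => Qp ψ β ξ - Qp ψ' β' ξ)
      = fun ξ => Qp ψ (fun i => β i + α i) ξ - Qp ψ' (fun i => β' i + α i) ξ := by
  have main : ∀ L : List (Fin d),
      L.foldr (fun i g => (pd i)^[α i] g) (fun ξ => Qp ψ β ξ - Qp ψ' β' ξ)
        = fun ξ => Qp ψ (fun j => β j + L.count j * α j) ξ
            - Qp ψ' (fun j => β' j + L.count j * α j) ξ := by
    intro L
    induction L with
    | nil => simp
    | cons i L ihL =>
      rw [List.foldr_cons, ihL, pd_iter_Qp_sub hψ hψ']
      have hupd : ∀ (γ : Fin d → ℕ),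
          Function.update (fun j => γ j + L.count j * α j) i
            ((γ i + L.count i * α i) + α i)
          = fun j => γ j + (i :: L).count j * α j := by
        intro γ
        funext j
        by_cases hji : j = i
        · subst hji
          rw [Function.update_self, List.count_cons_self]
          ring
        · rw [Function.update_of_ne hji, List.count_cons_of_ne (Ne.symm hji)]
      rw [hupd β, hupd β']
  rw [md, main (List.finRange d)]
  have hcount : ∀ j : Fin d, (List.finRange d).count j = 1 :=
    fun j => List.count_eq_one_of_mem (List.nodup_finRange d) (List.mem_finRange j)
  funext ξ
  congr 1 <;> · congr 1; funext j; rw [hcount j]; ring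

end Multi

section Final
variable {s : ℝ} {n : ℕ}

/-- scaled family for `χ₀(2ξ)` -/
def psiB (s : ℝ) : ℕ → ℝ → ℝ := fun k x => 2 ^ k * phi s k (2 * x)

/-- zero family -/
def psiZ : ℕ → ℝ → ℝ := fun _ _ => 0

theorem hasDerivAt_psiB (hs : 1 < s) (k : ℕ) (x : ℝ) :
    HasDerivAt (psiB s k) (psiB s (k + 1) x) x := by
  have hinner : HasDerivAt (fun y : ℝ => 2 * y) 2 x := by
    simpa using (hasDerivAt_id x).const_mul 2
  have h1 : HasDerivAt (fun y : ℝ => phi s k (2 * y)) (phi s (k + 1) (2 * x) * 2) x :=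
    (hasDerivAt_phi hs k (2 * x)).comp x hinner
  have h2 := h1.const_mul ((2 : ℝ) ^ k)
  have : (2:ℝ) ^ k * (phi s (k + 1) (2 * x) * 2) = 2 ^ (k + 1) * phi s (k + 1) (2 * x) := by
    ring
  rw [this] at h2
  exact h2

theorem hasDerivAt_psiZ (k : ℕ) (x : ℝ) : HasDerivAt (psiZ k) (psiZ (k + 1) x) x :=
  hasDerivAt_const x 0

theorem abs_psiB_le (hs : 1 < s) (k : ℕ) (x : ℝ) : |psiB s k x| ≤ 2 ^ k * Bnd s k := by
  rw [psiB, abs_mul, abs_pow, abs_two]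
  exact mul_le_mul_of_nonneg_left (abs_phi_le hs k (2 * x)) (by positivity)

theorem Qp_psiZ (hn : 1 ≤ n) (β : Fin n → ℕ) (ξ : Fin n → ℝ) : Qp psiZ β ξ = 0 := by
  rw [Qp]
  have : (Finset.univ : Finset (Fin n)).Nonempty := by
    refine ⟨⟨0, by omega⟩, Finset.mem_univ _⟩
  obtain ⟨i, hi⟩ := this
  exact Finset.prod_eq_zero hi rfl

theorem prod_Bnd (α : Fin n → ℕ) :
    ∏ i, Bnd s (α i) = ((eps s)⁻¹) ^ (msize α) * (((mfact α : ℕ) : ℝ)) ^ s := by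
  calc ∏ i, Bnd s (α i)
      = ∏ i, (((eps s)⁻¹) ^ (α i) * (((α i).factorial : ℝ)) ^ s) :=
        Finset.prod_congr rfl (fun i _ => Bnd_eq (α i))
    _ = (∏ i, ((eps s)⁻¹) ^ (α i)) * ∏ i, (((α i).factorial : ℝ)) ^ s :=
        Finset.prod_mul_distrib
    _ = ((eps s)⁻¹) ^ (msize α) * (((mfact α : ℕ) : ℝ)) ^ s := by
        rw [Finset.prod_pow_eq_pow_sum, msize]
        congr 1
        rw [Real.finset_prod_rpow _ _ (fun i _ => by positivity)]
        congr 1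
        rw [mfact]
        push_cast
        rfl

theorem abs_Qp_phi_le (hs : 1 < s) (α : Fin n → ℕ) (ξ : Fin n → ℝ) :
    |Qp (phi s) α ξ| ≤ ∏ i, Bnd s (α i) := by
  rw [Qp, Finset.abs_prod]
  exact Finset.prod_le_prod (fun i _ => abs_nonneg _) (fun i _ => abs_phi_le hs (α i) (ξ i))

theorem abs_Qp_psiB_le (hs : 1 < s) (α : Fin n → ℕ) (ξ : Fin n → ℝ) :
    |Qp (psiB s) α ξ| ≤ 2 ^ (msize α) * ∏ i, Bnd s (α i) := by
  rw [Qp, Finset.abs_prod]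
  calc ∏ i, |psiB s (α i) (ξ i)| ≤ ∏ i, (2 ^ (α i) * Bnd s (α i)) :=
        Finset.prod_le_prod (fun i _ => abs_nonneg _) (fun i _ => abs_psiB_le hs (α i) (ξ i))
    _ = (∏ i, (2:ℝ) ^ (α i)) * ∏ i, Bnd s (α i) := Finset.prod_mul_distrib
    _ = 2 ^ (msize α) * ∏ i, Bnd s (α i) := by rw [Finset.prod_pow_eq_pow_sum, msize]

end Final

section Final2
variable {s : ℝ} {n : ℕ}

theorem contDiff_Qp {ψ : ℕ → ℝ → ℝ} (h : ∀ k, ContDiff ℝ (⊤ : ℕ∞) (ψ k)) (β : Fin n → ℕ) :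
    ContDiff ℝ (⊤ : ℕ∞) (Qp ψ β) := by
  have main : ∀ t : Finset (Fin n),
      ContDiff ℝ (⊤ : ℕ∞) (fun ξ : Fin n → ℝ => ∏ i ∈ t, ψ (β i) (ξ i)) := by
    intro t
    induction t using Finset.induction with
    | empty => simpa using contDiff_const
    | @insert i t hnotmem ih =>
      have heval : ContDiff ℝ (⊤ : ℕ∞) (fun ξ : Fin n → ℝ => ξ i) :=
        (ContinuousLinearMap.proj (R := ℝ) (φ := fun _ : Fin n => ℝ) i).contDiff
      have hfac : ContDiff ℝ (⊤ : ℕ∞) (fun ξ : Fin n → ℝ => ψ (β i) (ξ i)) :=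
        (h (β i)).comp heval
      simp only [Finset.prod_insert hnotmem]
      exact hfac.mul ih
  exact main Finset.univ

theorem contDiff_psiB (hs : 1 < s) (k : ℕ) : ContDiff ℝ (⊤ : ℕ∞) (psiB s k) := by
  have h1 : ContDiff ℝ (⊤ : ℕ∞) (fun x : ℝ => 2 * x) := contDiff_const.mul contDiff_id
  exact contDiff_const.mul ((contDiff_phi hs k).comp h1)

theorem exists_big_coord {ξ : Fin n → ℝ} (h : 2 < ‖ξ‖) : ∃ i, 2 < |ξ i| := by
  by_contra hc
  push_neg at hc
  have : ‖ξ‖ ≤ 2 := by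
    apply pi_norm_le_iff_of_nonneg (by norm_num) |>.2
    intro i
    simpa [Real.norm_eq_abs] using hc i
  linarith

theorem chi0_eq_one (hs : 1 < s) {ξ : Fin n → ℝ} (h : ‖ξ‖ ≤ 5 / 4) :
    Qp (phi s) (fun _ => 0) ξ = 1 := by
  rw [Qp]
  apply Finset.prod_eq_one
  intro i _
  apply phi0_eq_one hs
  have := norm_le_pi_norm ξ i
  rw [Real.norm_eq_abs] at this
  linarith

theorem chi0_eq_zero (hs : 1 < s) {ξ : Fin n → ℝ} (h : 2 < ‖ξ‖) :
    Qp (phi s) (fun _ => 0) ξ = 0 := by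
  obtain ⟨i, hi⟩ := exists_big_coord h
  exact Finset.prod_eq_zero (Finset.mem_univ i) (phi0_eq_zero hs hi)

theorem chiB_eq_one (hs : 1 < s) {ξ : Fin n → ℝ} (h : ‖ξ‖ ≤ 5 / 8) :
    Qp (psiB s) (fun _ => 0) ξ = 1 := by
  rw [Qp]
  apply Finset.prod_eq_one
  intro i _
  have hcoord := norm_le_pi_norm ξ i
  rw [Real.norm_eq_abs] at hcoord
  show psiB s 0 (ξ i) = 1
  rw [psiB, pow_zero, one_mul]
  apply phi0_eq_one hs
  rw [abs_mul, abs_two]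
  linarith

theorem chiB_eq_zero (hs : 1 < s) {ξ : Fin n → ℝ} (h : 2 < ‖ξ‖) :
    Qp (psiB s) (fun _ => 0) ξ = 0 := by
  obtain ⟨i, hi⟩ := exists_big_coord h
  apply Finset.prod_eq_zero (Finset.mem_univ i)
  show psiB s 0 (ξ i) = 0
  rw [psiB, pow_zero, one_mul]
  apply phi0_eq_zero hs
  rw [abs_mul, abs_two]
  linarith

theorem md_chi0 (hs : 1 < s) (hn : 1 ≤ n) (α : Fin n → ℕ) :
    md α (Qp (phi s) (fun _ => 0)) = Qp (phi s) α := by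
  have h0 : Qp (phi s) (fun _ : Fin n => 0) =
      fun ξ => Qp (phi s) (fun _ => 0) ξ - Qp psiZ (fun _ => 0) ξ := by
    funext ξ
    rw [Qp_psiZ hn, sub_zero]
  rw [h0, md_Qp_sub (fun k x => hasDerivAt_phi hs k x) hasDerivAt_psiZ]
  funext ξ
  rw [Qp_psiZ hn, sub_zero]
  congr 1
  funext i
  omega

theorem md_chi (hs : 1 < s) (α : Fin n → ℕ) :
    md α (fun ξ => Qp (phi s) (fun _ => 0) ξ - Qp (psiB s) (fun _ => 0) ξ)
      = fun ξ => Qp (phi s) α ξ - Qp (psiB s) α ξ := by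
  rw [md_Qp_sub (fun k x => hasDerivAt_phi hs k x) (fun k x => hasDerivAt_psiB hs k x)]
  have : (fun i : Fin n => 0 + α i) = α := by funext i; omega
  rw [this]

end Final2

end Part2

end GevreyAux

open GevreyAux

/-- **Gevrey dyadic partition of unity** (equations (2.21) and (A.2.7)): for `s > 1` there
exist Gevrey-`s` compactly supported functions `χ₀` and `χ`, with `supp χ` in a compact annulus
away from the origin, such that `χ₀(ξ) + Σ_{ν≥1} χ(2^{−ν}ξ) = 1` with a locally finite sum. -/
theorem gevrey_dyadic_partition_of_unity
    (s : ℝ) (hs : 1 < s) (n : ℕ) (hn : 1 ≤ n) :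
    ∃ C > 0, ∃ χ₀ χ : (Fin n → ℝ) → ℝ, ∃ r₁ r₂ : ℝ,
      0 < r₁ ∧ r₁ < r₂ ∧
      ContDiff ℝ (⊤ : ℕ∞) χ₀ ∧ ContDiff ℝ (⊤ : ℕ∞) χ ∧
      HasCompactSupport χ₀ ∧ HasCompactSupport χ ∧
      tsupport χ ⊆ {ξ : Fin n → ℝ | r₁ ≤ ‖ξ‖ ∧ ‖ξ‖ ≤ r₂} ∧
      (∀ (α : Fin n → ℕ) (ξ : Fin n → ℝ),
        ‖md α χ₀ ξ‖ ≤ C ^ (1 + msize α) * ((mfact α : ℕ) : ℝ) ^ s) ∧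
      (∀ (α : Fin n → ℕ) (ξ : Fin n → ℝ),
        ‖md α χ ξ‖ ≤ C ^ (1 + msize α) * ((mfact α : ℕ) : ℝ) ^ s) ∧
      (∀ ξ : Fin n → ℝ,
        {ν : ℕ | χ ((((2:ℝ) ^ (ν + 1))⁻¹) • ξ) ≠ 0}.Finite ∧
        χ₀ ξ + ∑' ν : ℕ, χ ((((2:ℝ) ^ (ν + 1))⁻¹) • ξ) = 1) := by
  classical
  have heps : 0 < eps s := eps_pos
  set e : ℝ := (eps s)⁻¹ with he_def
  have he0 : 0 < e := by positivity
  have he4 : (4 : ℝ) ≤ e := by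
    rw [he_def, show (4:ℝ) = (1/4 : ℝ)⁻¹ by norm_num]
    exact inv_anti₀ heps (eps_le hs)
  set χ₀ : (Fin n → ℝ) → ℝ := Qp (phi s) (fun _ => 0) with hchi0_def
  set χ : (Fin n → ℝ) → ℝ :=
    fun ξ => Qp (phi s) (fun _ => 0) ξ - Qp (psiB s) (fun _ => 0) ξ with hchi_def
  have hC0 : (0:ℝ) < 2 * e := by positivity
  have hC1 : (1:ℝ) ≤ 2 * e := by linarith
  refine ⟨2 * e, hC0, χ₀, χ, 5/8, 2, by norm_num, by norm_num, ?_, ?_, ?_, ?_, ?_, ?_, ?_, ?_⟩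
  · exact contDiff_Qp (fun k => contDiff_phi hs k) _
  · exact (contDiff_Qp (fun k => contDiff_phi hs k) _).sub
      (contDiff_Qp (fun k => contDiff_psiB hs k) _)
  · -- compact support of χ₀
    apply HasCompactSupport.intro (isCompact_closedBall (0 : Fin n → ℝ) 2)
    intro ξ hξ
    have : 2 < ‖ξ‖ := by
      simpa [Metric.mem_closedBall, dist_zero_right] using hξ
    exact chi0_eq_zero hs this
  · -- compact support of χ
    apply HasCompactSupport.intro (isCompact_closedBall (0 : Fin n → ℝ) 2)
    intro ξ hξ
    have h2 : 2 < ‖ξ‖ := by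
      simpa [Metric.mem_closedBall, dist_zero_right] using hξ
    rw [hchi_def]
    simp only
    rw [chi0_eq_zero hs h2, chiB_eq_zero hs h2, sub_zero]
  · -- support of χ in the annulus
    have hclosed : IsClosed {ξ : Fin n → ℝ | 5/8 ≤ ‖ξ‖ ∧ ‖ξ‖ ≤ 2} := by
      have : {ξ : Fin n → ℝ | 5/8 ≤ ‖ξ‖ ∧ ‖ξ‖ ≤ 2}
          = {ξ : Fin n → ℝ | 5/8 ≤ ‖ξ‖} ∩ {ξ : Fin n → ℝ | ‖ξ‖ ≤ 2} := rfl
      rw [this]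
      exact (isClosed_le continuous_const continuous_norm).inter
        (isClosed_le continuous_norm continuous_const)
    apply closure_minimal _ hclosed
    intro ξ hξ
    rw [Function.mem_support] at hξ
    constructor
    · by_contra hlt
      push_neg at hlt
      apply hξ
      rw [hchi_def]
      simp only
      rw [chi0_eq_one hs (by linarith), chiB_eq_one hs (by linarith), sub_self]
    · by_contra hlt
      push_neg at hlt
      apply hξ
      rw [hchi_def]
      simp only
      rw [chi0_eq_zero hs hlt, chiB_eq_zero hs hlt, sub_self]
  · -- Gevrey bound for χ₀
    intro α ξ
    set k := msize α with hk
    have hM : (0:ℝ) ≤ ((mfact α : ℕ) : ℝ) ^ s := Real.rpow_nonneg (by positivity) s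
    have h1 : ‖md α χ₀ ξ‖ ≤ e ^ k * ((mfact α : ℕ) : ℝ) ^ s := by
      rw [hchi0_def, md_chi0 hs hn α, Real.norm_eq_abs]
      calc |Qp (phi s) α ξ| ≤ ∏ i, Bnd s (α i) := abs_Qp_phi_le hs α ξ
        _ = e ^ k * ((mfact α : ℕ) : ℝ) ^ s := by rw [prod_Bnd, he_def, hk]
    have h2 : e ^ k ≤ (2 * e) ^ (1 + k) := by
      have ha : e ^ k ≤ (2 * e) ^ k := pow_le_pow_left₀ he0.le (by linarith) k
      have hb : (2 * e) ^ k ≤ (2 * e) ^ (1 + k) :=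
        pow_le_pow_right₀ hC1 (by omega)
      linarith
    calc ‖md α χ₀ ξ‖ ≤ e ^ k * ((mfact α : ℕ) : ℝ) ^ s := h1
      _ ≤ (2 * e) ^ (1 + k) * ((mfact α : ℕ) : ℝ) ^ s :=
          mul_le_mul_of_nonneg_right h2 hM
  · -- Gevrey bound for χ
    intro α ξ
    set k := msize α with hk
    have hM : (0:ℝ) ≤ ((mfact α : ℕ) : ℝ) ^ s := Real.rpow_nonneg (by positivity) s
    have hprod : ∏ i, Bnd s (α i) = e ^ k * ((mfact α : ℕ) : ℝ) ^ s := by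
      rw [prod_Bnd, he_def, hk]
    have h1 : ‖md α χ ξ‖ ≤ (1 + 2 ^ k) * (e ^ k * ((mfact α : ℕ) : ℝ) ^ s) := by
      rw [hchi_def, md_chi hs α, Real.norm_eq_abs]
      have := abs_sub (Qp (phi s) α ξ) (Qp (psiB s) α ξ)
      calc |Qp (phi s) α ξ - Qp (psiB s) α ξ|
          ≤ |Qp (phi s) α ξ| + |Qp (psiB s) α ξ| := abs_sub _ _
        _ ≤ (∏ i, Bnd s (α i)) + 2 ^ k * ∏ i, Bnd s (α i) := by
            have := abs_Qp_psiB_le hs α ξ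
            rw [← hk] at this
            exact add_le_add (abs_Qp_phi_le hs α ξ) this
        _ = (1 + 2 ^ k) * (∏ i, Bnd s (α i)) := by ring
        _ = (1 + 2 ^ k) * (e ^ k * ((mfact α : ℕ) : ℝ) ^ s) := by rw [hprod]
    have hek : (0:ℝ) ≤ e ^ k := by positivity
    have h2k : (1:ℝ) ≤ 2 ^ k := one_le_pow₀ (by norm_num)
    have h2 : (1 + 2 ^ k) * e ^ k ≤ (2 * e) ^ (1 + k) := by
      have hxp : (2 * e) ^ (1 + k) = (2 * e) * (2 ^ k * e ^ k) := by
        rw [pow_add, pow_one, mul_pow]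
      rw [hxp]
      have hstep : (1 + 2 ^ k : ℝ) ≤ (2 * e) * 2 ^ k := by nlinarith
      calc (1 + 2 ^ k : ℝ) * e ^ k ≤ ((2 * e) * 2 ^ k) * e ^ k :=
            mul_le_mul_of_nonneg_right hstep hek
        _ = (2 * e) * (2 ^ k * e ^ k) := by ring
    calc ‖md α χ ξ‖ ≤ (1 + 2 ^ k) * (e ^ k * ((mfact α : ℕ) : ℝ) ^ s) := h1
      _ = ((1 + 2 ^ k) * e ^ k) * ((mfact α : ℕ) : ℝ) ^ s := by ring
      _ ≤ (2 * e) ^ (1 + k) * ((mfact α : ℕ) : ℝ) ^ s :=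
          mul_le_mul_of_nonneg_right h2 hM
  · -- the partition of unity identity
    intro ξ
    obtain ⟨N, hN⟩ := pow_unbounded_of_one_lt ‖ξ‖ (one_lt_two (α := ℝ))
    set G : ℕ → ℝ := fun ν => Qp (phi s) (fun _ => 0) (((2:ℝ) ^ ν)⁻¹ • ξ) with hG
    have hsmul_norm : ∀ ν : ℕ, ‖((2:ℝ) ^ ν)⁻¹ • ξ‖ = ((2:ℝ) ^ ν)⁻¹ * ‖ξ‖ := by
      intro ν
      rw [norm_smul, Real.norm_eq_abs, abs_inv, abs_pow, abs_two]
    have hsmall : ∀ ν : ℕ, N ≤ ν → ‖((2:ℝ) ^ (ν + 1))⁻¹ • ξ‖ ≤ 5/8 := by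
      intro ν hν
      rw [hsmul_norm (ν + 1)]
      have hp1 : (2:ℝ) ^ N ≤ 2 ^ ν := pow_le_pow_right₀ (by norm_num) hν
      have hp2 : (0:ℝ) < 2 ^ (ν + 1) := by positivity
      have hn2 : ‖ξ‖ < 2 ^ ν := lt_of_lt_of_le hN hp1
      have : ((2:ℝ) ^ (ν + 1))⁻¹ * ‖ξ‖ < ((2:ℝ) ^ (ν + 1))⁻¹ * 2 ^ ν := by
        apply mul_lt_mul_of_pos_left hn2 (by positivity)
      have heq : ((2:ℝ) ^ (ν + 1))⁻¹ * 2 ^ ν = 1/2 := by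
        rw [pow_succ]
        field_simp
      rw [heq] at this
      linarith
    have hterm : ∀ ν : ℕ, χ (((2:ℝ) ^ (ν + 1))⁻¹ • ξ) = G (ν + 1) - G ν := by
      intro ν
      rw [hchi_def]
      simp only
      congr 1
      rw [hG]
      simp only [Qp]
      apply Finset.prod_congr rfl
      intro i _
      show psiB s 0 ((((2:ℝ) ^ (ν + 1))⁻¹ • ξ) i) = phi s 0 ((((2:ℝ) ^ ν)⁻¹ • ξ) i)
      rw [psiB, pow_zero, one_mul]
      congr 1
      simp only [Pi.smul_apply, smul_eq_mul]
      rw [pow_succ]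
      field_simp
    have hzero : ∀ ν : ℕ, ν ∉ Finset.range N → χ (((2:ℝ) ^ (ν + 1))⁻¹ • ξ) = 0 := by
      intro ν hν
      rw [Finset.mem_range, not_lt] at hν
      have hsm := hsmall ν hν
      rw [hchi_def]
      simp only
      rw [chi0_eq_one hs (by linarith), chiB_eq_one hs hsm, sub_self]
    constructor
    · apply Set.Finite.subset (Finset.range N).finite_toSet
      intro ν hν
      simp only [Set.mem_setOf_eq] at hν
      by_contra hc
      exact hν (hzero ν (by simpa using hc))
    · rw [tsum_eq_sum hzero]
      have hsum : ∑ ν ∈ Finset.range N, χ (((2:ℝ) ^ (ν + 1))⁻¹ • ξ) = G N - G 0 := by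
        rw [Finset.sum_congr rfl (fun ν _ => hterm ν)]
        exact Finset.sum_range_sub (f := G) N
      rw [hsum]
      have hG0 : G 0 = χ₀ ξ := by
        rw [hG, hchi0_def]
        simp
      have hGN : G N = 1 := by
        rw [hG]
        apply chi0_eq_one hs
        rw [hsmul_norm N]
        have hp : (0:ℝ) < 2 ^ N := by positivity
        have h1 : (1:ℝ) ≤ 2 ^ N := one_le_pow₀ (by norm_num)
        have hξnn : 0 ≤ ‖ξ‖ := norm_nonneg ξ
        have : ((2:ℝ) ^ N)⁻¹ * ‖ξ‖ < ((2:ℝ) ^ N)⁻¹ * 2 ^ N := by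
          apply mul_lt_mul_of_pos_left hN (by positivity)
        rw [inv_mul_cancel₀ (ne_of_gt hp)] at this
        linarith
      rw [hG0, hGN]
      ring
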